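/- Let M be a finite signed measure on ℤ. Then ‖M‖_TV = ‖(I₁ − I)*M‖_W, i.e. the total variation norm of M equals the Wasserstein norm of the convolution of M with the signed measure I₁ − I (point mass at 1 minus point mass at 0). -/

import Mathlib

open scoped BigOperators

noncomputable section

/-- A (signed) measure on ℤ, represented by its point masses. -/
abbrev SM := ℤ → ℝ

/-- Point mass at `a ∈ ℤ`. -/
def dirac (a : ℤ) : SM := fun k => if k = a then 1 else 0

/-- Convolution of two measures on ℤ. -/
def conv (M V : SM) : SM := fun m => ∑' k : ℤ, M (m - k) * V k

/-- Convolution powers, `convPow M 0 = I` (point mass at 0). -/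
def convPow (M : SM) : ℕ → SM
  | 0 => dirac 0
  | n + 1 => conv (convPow M n) M

/-- Exponential of a measure: `exp M = ∑_{j≥0} M^{*j}/j!`. -/
def expSM (M : SM) : SM := fun k => ∑' j : ℕ, convPow M j k / (Nat.factorial j : ℝ)

/-- Total variation norm `‖M‖_TV = ∑_k |M{k}|`. -/
def tvNorm (M : SM) : ℝ := ∑' k : ℤ, |M k|

/-- Local (point) norm `‖M‖_∞ = sup_k |M{k}|`. -/
def locNorm (M : SM) : ℝ := ⨆ k : ℤ, |M k|

/-- `M((-∞,k])`. -/
def cdf (M : SM) (k : ℤ) : ℝ := ∑' j : ℤ, if j ≤ k then M j else 0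

/-- Wasserstein norm `‖M‖_W = ∑_k |M((-∞,k])|`. -/
def wNorm (M : SM) : ℝ := ∑' k : ℤ, |cdf M k|

/-- ℓ_r norm. -/
def lrNorm (r : ℝ) (M : SM) : ℝ := (∑' k : ℤ, |M k| ^ r) ^ (1 / r)

/-- L_r norm. -/
def LrNorm (r : ℝ) (M : SM) : ℝ := (∑' k : ℤ, |cdf M k| ^ r) ^ (1 / r)

/-- Transition probabilities of the three-state Markov chain: states `0,1,2`
correspond to `a₁,a₂,a₃`; from `a₁` or `a₃` the probabilities are `(α, 1-2α, α)`,
from `a₂` they are `(β, 1-2β, β)`. -/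
def transP (a b : ℝ) (i j : Fin 3) : ℝ :=
  if i = 1 then (if j = 1 then 1 - 2 * b else b) else (if j = 1 then 1 - 2 * a else a)

/-- Joint distribution of `(Sₙ, ξₙ)`, with `f(a₁)=-1, f(a₂)=0, f(a₃)=1`,
`Sₙ = f(ξ₁)+⋯+f(ξₙ)` and initial distribution `p`. -/
def jointDist (a b : ℝ) (p : Fin 3 → ℝ) : ℕ → ℤ → Fin 3 → ℝ
  | 0 => fun k i => if k = 0 then p i else 0
  | n + 1 => fun k j =>
      ∑ i : Fin 3, jointDist a b p n (k - ((j : ℤ) - 1)) i * transP a b i j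

/-- `Fₙ`, the distribution of `Sₙ`. -/
def F (a b : ℝ) (p : Fin 3 → ℝ) (n : ℕ) : SM := fun k => ∑ j : Fin 3, jointDist a b p n k j

/-- The symmetric Skellam distribution `D = exp{λ(I₁-I) + λ(I₋₁-I)}`,
`λ = β/(1-2α+2β)`. -/
def skellam (a b : ℝ) : SM :=
  expSM ((b / (1 - 2 * a + 2 * b)) • (dirac 1 - dirac 0)
    + (b / (1 - 2 * a + 2 * b)) • (dirac (-1) - dirac 0))

/-- `L = (I₋₁ + I₁)/2`. -/
def Lm : SM := (2 : ℝ)⁻¹ • (dirac (-1) + dirac 1)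

/-- `U = L - I`. -/
def Um : SM := Lm - dirac 0

/-- The measure `A₁` of the first-order asymptotic expansion. -/
def A1 (a b p2 : ℝ) : SM :=
  (2 * (a - b) / (1 - 2 * a + 2 * b) * ((1 - 2 * a) / (1 - 2 * a + 2 * b) - p2)) • Um

/-- The measure `A₂` of the first-order asymptotic expansion. -/
def A2 (a b : ℝ) : SM :=
  (2 * b / (1 - 2 * a + 2 * b) ^ 2 *
    (2 * (a - b) * (1 - 2 * a) / (1 - 2 * a + 2 * b) - b)) • convPow Um 2

/-- The compound geometric law `H = (1-2α) Σ_j (2α)^j L^{*(j+1)}`. -/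
def Hm (a : ℝ) : SM := fun k => ∑' j : ℕ, (1 - 2 * a) * (2 * a) ^ j * convPow Lm (j + 1) k

/-- `G = exp{(2β(1-2α)/(1-2α+2β))(H - I)}`. -/
def Gm (a b : ℝ) : SM := expSM ((2 * b * (1 - 2 * a) / (1 - 2 * a + 2 * b)) • (Hm a - dirac 0))


lemma conv_diff_eval (M : SM) (m : ℤ) :
    conv (dirac 1 - dirac 0) M m = M (m - 1) - M m := by
  unfold conv
  rw [tsum_eq_sum (s := {m - 1, m}) (by
    intro b hb
    simp only [Finset.mem_insert, Finset.mem_singleton, not_or] at hb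
    have h1 : m - b ≠ 1 := by omega
    have h0 : m - b ≠ 0 := by omega
    simp [dirac, Pi.sub_apply, h1, h0])]
  rw [Finset.sum_pair (by omega : m - 1 ≠ m)]
  simp [dirac, Pi.sub_apply]
  ring

lemma summable_indicator_le (M : SM) (hM : Summable fun k => |M k|) (c : ℤ) :
    Summable fun j : ℤ => if j ≤ c then M j else 0 := by
  have hMs : Summable M := by
    refine Summable.of_norm ?_
    simpa [Real.norm_eq_abs] using hM
  have := hMs.indicator (Set.Iic c)
  refine this.congr fun j => ?_
  simp [Set.indicator_apply, Set.mem_Iic]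

lemma cdf_conv_diff (M : SM) (hM : Summable fun k => |M k|) (k : ℤ) :
    cdf (conv (dirac 1 - dirac 0) M) k = -M k := by
  have hMs : Summable M := by
    refine Summable.of_norm ?_
    simpa [Real.norm_eq_abs] using hM
  unfold cdf
  have heq : (fun j : ℤ => if j ≤ k then conv (dirac 1 - dirac 0) M j else 0)
      = fun j : ℤ => (if j ≤ k then M (j - 1) else 0) - (if j ≤ k then M j else 0) := by
    funext j
    by_cases h : j ≤ k <;> simp [h, conv_diff_eval]
  rw [heq]
  have h1 : Summable fun j : ℤ => if j ≤ k then M (j - 1) else 0 := by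
    have := summable_indicator_le M hM (k - 1)
    have := (Equiv.subRight (1 : ℤ)).summable_iff.mpr this
    refine this.congr fun j => ?_
    simp only [Function.comp, Equiv.subRight_apply]
    congr 1
    · simp only [eq_iff_iff]; omega
  have h2 : Summable fun j : ℤ => if j ≤ k then M j else 0 :=
    summable_indicator_le M hM k
  rw [Summable.tsum_sub h1 h2]
  have hshift : (∑' j : ℤ, if j ≤ k then M (j - 1) else 0)
      = ∑' j : ℤ, if j ≤ k - 1 then M j else 0 := by
    rw [← (Equiv.subRight (1 : ℤ)).tsum_eq (fun j => if j ≤ k - 1 then M j else 0)]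
    refine tsum_congr fun j => ?_
    simp only [Function.comp, Equiv.subRight_apply]
    congr 1
    · simp only [eq_iff_iff]; omega
  rw [hshift]
  have hsplit : (∑' j : ℤ, if j ≤ k then M j else 0)
      = (∑' j : ℤ, if j ≤ k - 1 then M j else 0) + M k := by
    have hpt : (fun j : ℤ => if j ≤ k then M j else 0)
        = fun j : ℤ => (if j ≤ k - 1 then M j else 0) + (if j = k then M j else 0) := by
      funext j
      rcases lt_trichotomy j k with h | h | h
      · have : j ≤ k := le_of_lt h
        have h1 : j ≤ k - 1 := by omega
        have h2 : j ≠ k := by omega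
        simp [this, h1, h2]
      · subst h; simp
      · have h1 : ¬ j ≤ k := not_le.mpr h
        have h2 : ¬ j ≤ k - 1 := by omega
        have h3 : j ≠ k := by omega
        simp [h1, h2, h3]
    rw [hpt]
    have hs1 := summable_indicator_le M hM (k - 1)
    have hs2 : Summable fun j : ℤ => if j = k then M j else 0 := by
      refine (hasSum_ite_eq k (M k)).summable.congr fun j => ?_
      by_cases h : j = k <;> simp [h]
    rw [Summable.tsum_add hs1 hs2]
    congr 1
    have := tsum_ite_eq k M
    refine Eq.trans (tsum_congr fun j => ?_) this
    by_cases h : j = k <;> simp [h]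
  rw [hsplit]
  ring

theorem tvNorm_eq_wNorm_diff :
    ∀ M : SM, Summable (fun k => |M k|) →
      tvNorm M = wNorm (conv (dirac 1 - dirac 0) M) := by
  intro M hM
  unfold tvNorm wNorm
  refine tsum_congr fun k => ?_
  rw [cdf_conv_diff M hM k, abs_neg]
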